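/- arXiv:1203.4947 — 7 statements merged into one kernel-verified Lean document; each statement's English description precedes it below -/
import Mathlib

section
/- Let f(z) = Σ φ_n z^n be a formal power series, m ≥ 1, C ≥ 1, and suppose there exists n₀ such that for every n ≥ n₀ there is an index n' ∈ {n-1,...,n-m} with |φ_n| ≤ C|φ_{n'}|. Then limsup_{n→∞} |φ_n|^{1/n} ≤ C, i.e., the radius of convergence of the series is at least 1/C > 0. -/
open Filter ENNReal

/-- If `f(z) = Σ φ_n z^n`, `m ≥ 1`, `C ≥ 1`, and there is `n₀` such that for every `n ≥ n₀`
there is `n' ∈ {n-1, …, n-m}` with `|φ_n| ≤ C |φ_{n'}|`, then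
`limsup |φ_n|^{1/n} ≤ C`, i.e. the radius of convergence is at least `1/C > 0`. -/
theorem stmt0 (φ : ℕ → ℂ) (m : ℕ) (hm : 1 ≤ m) (C : ℝ) (hC : 1 ≤ C)
    (h : ∃ n₀ : ℕ, ∀ n, n₀ ≤ n → ∃ n' : ℕ, n' < n ∧ n ≤ n' + m ∧
      ‖φ n‖ ≤ C * ‖φ n'‖) :
    Filter.limsup (fun n : ℕ => (‖φ n‖₊ : ℝ≥0∞) ^ (1 / (n : ℝ))) Filter.atTop
      ≤ ENNReal.ofReal C := by
  obtain ⟨n₀, hn₀⟩ := h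
  set B : ℝ := 1 + ∑ k ∈ Finset.range (n₀ + 1), ‖φ k‖ with hB
  have hB1 : 1 ≤ B := by
    have : 0 ≤ ∑ k ∈ Finset.range (n₀ + 1), ‖φ k‖ :=
      Finset.sum_nonneg fun k _ => norm_nonneg _
    linarith
  have hBbound : ∀ k, k ≤ n₀ → ‖φ k‖ ≤ B := by
    intro k hk
    have : ‖φ k‖ ≤ ∑ j ∈ Finset.range (n₀ + 1), ‖φ j‖ :=
      Finset.single_le_sum (f := fun j => ‖φ j‖)
        (fun j _ => norm_nonneg _) (Finset.mem_range.2 (Nat.lt_succ_of_le hk))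
    linarith
  have hC0 : (0:ℝ) < C := lt_of_lt_of_le one_pos hC
  -- key bound : |φ n| ≤ C^n * B
  have key : ∀ n, ‖φ n‖ ≤ C ^ n * B := by
    intro n
    induction n using Nat.strong_induction_on with
    | _ n ih =>
      by_cases hn : n ≤ n₀
      · calc ‖φ n‖ ≤ B := hBbound n hn
        _ = 1 * B := (one_mul B).symm
        _ ≤ C ^ n * B := by
            apply mul_le_mul_of_nonneg_right (one_le_pow₀ hC) (by linarith)
      · obtain ⟨n', hn'lt, _, hle⟩ := hn₀ n (le_of_not_ge hn)
        calc ‖φ n‖ ≤ C * ‖φ n'‖ := hle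
          _ ≤ C * (C ^ n' * B) := by
              apply mul_le_mul_of_nonneg_left (ih n' hn'lt) (le_of_lt hC0)
          _ = C ^ (n' + 1) * B := by ring
          _ ≤ C ^ n * B := by
              apply mul_le_mul_of_nonneg_right _ (by linarith)
              exact pow_le_pow_right₀ hC hn'lt
  -- pointwise bound on the rpow terms, for n ≥ 1
  have ev : ∀ᶠ n : ℕ in atTop, (‖φ n‖₊ : ℝ≥0∞) ^ (1 / (n : ℝ))
      ≤ ENNReal.ofReal C * ENNReal.ofReal (B ^ (1 / (n : ℝ))) := by
    filter_upwards [eventually_ge_atTop 1] with n hn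
    have hnpos : (0:ℝ) < n := by exact_mod_cast hn
    have h1 : (‖φ n‖₊ : ℝ≥0∞) ≤ ENNReal.ofReal (C ^ n * B) := by
      rw [show (‖φ n‖₊ : ℝ≥0∞) = ENNReal.ofReal ‖φ n‖ from (ofReal_norm (φ n)).symm]
      exact ENNReal.ofReal_le_ofReal (key n)
    calc (‖φ n‖₊ : ℝ≥0∞) ^ (1 / (n : ℝ))
        ≤ ENNReal.ofReal (C ^ n * B) ^ (1 / (n : ℝ)) := by
          exact ENNReal.rpow_le_rpow h1 (by positivity)
      _ = ENNReal.ofReal ((C ^ n * B) ^ (1 / (n : ℝ))) := by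
          rw [← ENNReal.ofReal_rpow_of_pos (by positivity)]
      _ = ENNReal.ofReal (C * B ^ (1 / (n : ℝ))) := by
          congr 1
          rw [Real.mul_rpow (by positivity) (by linarith), ← Real.rpow_natCast C n,
            ← Real.rpow_mul (le_of_lt hC0)]
          rw [mul_one_div, div_self (ne_of_gt hnpos), Real.rpow_one]
      _ = ENNReal.ofReal C * ENNReal.ofReal (B ^ (1 / (n : ℝ))) := by
          rw [ENNReal.ofReal_mul (le_of_lt hC0)]
  have tendB : Tendsto (fun n : ℕ => ENNReal.ofReal C * ENNReal.ofReal (B ^ (1 / (n : ℝ))))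
      atTop (nhds (ENNReal.ofReal C)) := by
    have h0 : Tendsto (fun n : ℕ => (1 / (n : ℝ))) atTop (nhds 0) :=
      tendsto_one_div_atTop_nhds_zero_nat
    have h1 : Tendsto (fun n : ℕ => B ^ (1 / (n : ℝ))) atTop (nhds 1) := by
      have := (Real.continuousAt_const_rpow (a := B) (b := 0)
        (by linarith)).tendsto.comp h0
      simpa [Real.rpow_zero, Function.comp_def] using this
    have h2 : Tendsto (fun n : ℕ => ENNReal.ofReal (B ^ (1 / (n : ℝ)))) atTop
        (nhds 1) := by
      have := (ENNReal.continuous_ofReal.tendsto 1).comp h1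
      simpa [Function.comp_def] using this
    have := ENNReal.Tendsto.const_mul (a := ENNReal.ofReal C) h2
      (Or.inr ENNReal.ofReal_ne_top)
    simpa using this
  calc Filter.limsup (fun n : ℕ => (‖φ n‖₊ : ℝ≥0∞) ^ (1 / (n : ℝ))) Filter.atTop
      ≤ Filter.limsup (fun n : ℕ => ENNReal.ofReal C * ENNReal.ofReal (B ^ (1 / (n : ℝ))))
        Filter.atTop := limsup_le_limsup ev
    _ = ENNReal.ofReal C := tendB.limsup_eq
end

section
/- Let (φ_n) be a sequence of complex numbers, m ≥ 1, C ≥ 1, and suppose there exists n₀ with φ_{n₀} ≠ 0 such that for every n ≥ n₀ there is an index n' ∈ {n+1,...,n+m} with |φ_{n'}| ≥ |φ_n|/C. Then limsup_{n→∞} |φ_n|^{1/n} ≥ 1/C; in particular the radius of convergence of Σ φ_n z^n is at most C < ∞. -/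
open Filter ENNReal

/-- If `(φ_n)` is a sequence in `ℂ`, `m ≥ 1`, `C ≥ 1`, and there is `n₀` with `φ_{n₀} ≠ 0`
such that for every `n ≥ n₀` there is `n' ∈ {n+1, …, n+m}` with `|φ_{n'}| ≥ |φ_n|/C`, then
`limsup |φ_n|^{1/n} ≥ 1/C`; in particular the radius of convergence of `Σ φ_n z^n` is at
most `C < ∞`. -/
theorem stmt1 (φ : ℕ → ℂ) (m : ℕ) (hm : 1 ≤ m) (C : ℝ) (hC : 1 ≤ C)
    (h : ∃ n₀ : ℕ, φ n₀ ≠ 0 ∧ ∀ n, n₀ ≤ n → ∃ n' : ℕ, n < n' ∧ n' ≤ n + m ∧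
      ‖φ n‖ / C ≤ ‖φ n'‖) :
    ENNReal.ofReal (1 / C) ≤
      Filter.limsup (fun n : ℕ => (‖φ n‖₊ : ℝ≥0∞) ^ (1 / (n : ℝ))) Filter.atTop := by
  obtain ⟨n₀, hφ0, hstep⟩ := h
  have hC0 : (0 : ℝ) < C := lt_of_lt_of_le one_pos hC
  set A := ‖φ n₀‖ with hAdef
  have hA : 0 < A := norm_pos_iff.mpr hφ0
  set F : ℕ → ℕ := fun n => if h' : n₀ ≤ n then (hstep n h').choose else n + 1 with hFdef
  have hF : ∀ n, n₀ ≤ n → n < F n ∧ ‖φ n‖ / C ≤ ‖φ (F n)‖ := by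
    intro n hn
    simp only [hFdef, dif_pos hn]
    exact ⟨(hstep n hn).choose_spec.1, (hstep n hn).choose_spec.2.2⟩
  set a : ℕ → ℕ := fun k => F^[k] n₀ with hadef
  have hsucc : ∀ k, a (k + 1) = F (a k) := fun k => Function.iterate_succ_apply' F k n₀
  have key : ∀ k, n₀ ≤ a k ∧ k ≤ a k ∧ A / C ^ k ≤ ‖φ (a k)‖ := by
    intro k
    induction k with
    | zero => simp [hadef, hAdef]
    | succ k ih =>
      obtain ⟨h1, h2, h3⟩ := ih
      obtain ⟨hlt, hbd⟩ := hF (a k) h1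
      rw [hsucc]
      refine ⟨h1.trans hlt.le, by omega, ?_⟩
      calc A / C ^ (k + 1) = (A / C ^ k) / C := by rw [pow_succ]; ring
        _ ≤ ‖φ (a k)‖ / C := by gcongr
        _ ≤ _ := hbd
  -- the subsequence tends to infinity
  have ha_tendsto : Tendsto a atTop atTop :=
    tendsto_atTop_mono (fun k => (key k).2.1) tendsto_id
  -- pointwise lower bound
  have hlow : ∀ k, 1 ≤ k → ENNReal.ofReal (A ^ (1 / (a k : ℝ)) / C) ≤
      (‖φ (a k)‖₊ : ℝ≥0∞) ^ (1 / (a k : ℝ)) := by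
    intro k hk
    obtain ⟨h1, h2, h3⟩ := key k
    have hak : (0 : ℝ) < (a k : ℝ) := by exact_mod_cast lt_of_lt_of_le hk h2
    have hr : 0 ≤ 1 / (a k : ℝ) := by positivity
    have habs : 0 < ‖φ (a k)‖ := lt_of_lt_of_le (by positivity) h3
    have hcoe : (‖φ (a k)‖₊ : ℝ≥0∞) = ENNReal.ofReal (‖φ (a k)‖) := by
      rw [ofReal_norm]; rfl
    rw [hcoe, ENNReal.ofReal_rpow_of_pos habs]
    apply ENNReal.ofReal_le_ofReal
    have step1 : (A / C ^ k) ^ (1 / (a k : ℝ)) ≤ ‖φ (a k)‖ ^ (1 / (a k : ℝ)) :=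
      Real.rpow_le_rpow (by positivity) h3 hr
    refine le_trans ?_ step1
    rw [Real.div_rpow hA.le (by positivity), ← Real.rpow_natCast C k,
      ← Real.rpow_mul hC0.le]
    have hCk : C ^ ((k : ℝ) * (1 / (a k : ℝ))) ≤ C := by
      nth_rewrite 2 [← Real.rpow_one C]
      apply Real.rpow_le_rpow_of_exponent_le hC
      rw [mul_one_div, div_le_one hak]
      exact_mod_cast h2
    gcongr
  -- the lower bound tends to ofReal (1/C)
  have htend : Tendsto (fun k => ENNReal.ofReal (A ^ (1 / (a k : ℝ)) / C)) atTop
      (nhds (ENNReal.ofReal (1 / C))) := by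
    apply ENNReal.continuous_ofReal.continuousAt.tendsto.comp
    have h1 : Tendsto (fun k => 1 / (a k : ℝ)) atTop (nhds 0) := by
      apply tendsto_one_div_atTop_nhds_zero_nat.comp ha_tendsto
    have h2 : Tendsto (fun k => A ^ (1 / (a k : ℝ))) atTop (nhds 1) := by
      have := (Real.continuousAt_const_rpow (b := (0:ℝ)) hA.ne').tendsto.comp h1
      simpa [Real.rpow_zero, Function.comp_def] using this
    have := h2.div_const C
    simpa using this
  refine le_of_forall_lt_imp_le_of_dense ?_
  intro b hb
  have hev : ∀ᶠ k in atTop, b ≤ ENNReal.ofReal (A ^ (1 / (a k : ℝ)) / C) :=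
    htend.eventually (eventually_ge_nhds hb)
  have hev2 : ∀ᶠ k in atTop, b ≤ (‖φ (a k)‖₊ : ℝ≥0∞) ^ (1 / ((a k : ℕ) : ℝ)) := by
    filter_upwards [hev, eventually_ge_atTop 1] with k hk hk1
    exact hk.trans (hlow k hk1)
  have hfreq : ∃ᶠ n in atTop, b ≤ (‖φ n‖₊ : ℝ≥0∞) ^ (1 / (n : ℝ)) :=
    ha_tendsto.frequently hev2.frequently
  exact le_limsup_of_frequently_le hfreq
end

section
/- Let h be analytic in a neighborhood of the closed disk of radius r centered at 0, and let ξ with |ξ| < r. Let (q_n) be a sequence of polynomials of degree ≤ M whose coefficients are uniformly bounded, and suppose for each n the function z ↦ (q_n(z) h(z) − (z−ξ) P_n(z))/z^{n+1} is analytic on D_r for some polynomial P_n of degree < n. Then limsup_{n→∞} |q_n(ξ) h(ξ)|^{1/n} ≤ |ξ|/r. -/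
open Filter Polynomial Metric

lemma aux_zero_int (R : ℝ) (hR : 0 < R) (n : ℕ) (p : Polynomial ℂ) (hp : p.degree < (n : ℕ)) :
    (∮ z in C((0:ℂ), R), Polynomial.eval z p * (z ^ (n + 1))⁻¹) = 0 := by
  rcases eq_or_ne p 0 with rfl | hp0
  · have : (∮ z in C((0:ℂ), R), Polynomial.eval z (0 : Polynomial ℂ) * (z ^ (n + 1))⁻¹)
        = ∮ _z in C((0:ℂ), R), (0 : ℂ) := by
      refine circleIntegral.integral_congr hR.le fun z _ => by simp
    rw [this]; simp [circleIntegral]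
  · have hnd : p.natDegree < n := (Polynomial.natDegree_lt_iff_degree_lt hp0).2 hp
    have hEq : Set.EqOn (fun z => Polynomial.eval z p * (z ^ (n + 1))⁻¹)
        (fun z => ∑ k ∈ Finset.range n, p.coeff k • z ^ ((k : ℤ) - (n + 1)))
        (sphere (0:ℂ) R) := by
      intro z hz
      have hz0 : z ≠ 0 := by
        rw [mem_sphere_iff_norm, sub_zero] at hz
        intro h0; rw [h0] at hz; simp at hz; exact hR.ne hz
      simp only [smul_eq_mul]
      rw [Polynomial.eval_eq_sum_range' hnd, Finset.sum_mul]
      refine Finset.sum_congr rfl fun k hk => ?_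
      rw [mul_assoc]
      congr 1
      rw [← zpow_natCast z k, ← zpow_natCast z (n+1), ← zpow_neg, ← zpow_add₀ hz0]
      norm_cast
    rw [circleIntegral.integral_congr hR.le hEq]
    have hsum : (∮ z in C((0:ℂ), R), ∑ k ∈ Finset.range n, p.coeff k • z ^ ((k:ℤ) - (n+1)))
        = ∑ k ∈ Finset.range n, ∮ z in C((0:ℂ), R), p.coeff k • z ^ ((k:ℤ) - (n+1)) := by
      simp only [circleIntegral, Finset.smul_sum]
      rw [intervalIntegral.integral_finset_sum]
      intro k _
      apply Continuous.intervalIntegrable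
      simp only [deriv_circleMap]
      exact ((continuous_circleMap 0 R).mul continuous_const).smul
        (Continuous.smul (f := fun _ => p.coeff k) (g := fun θ => circleMap 0 R θ ^ ((k:ℤ) - (n+1))) continuous_const ((continuous_circleMap 0 R).zpow₀ _
          (fun θ => Or.inl (circleMap_ne_center hR.ne'))))
    rw [hsum]
    refine Finset.sum_eq_zero fun k hk => ?_
    rw [circleIntegral.integral_smul]
    have hm : (k:ℤ) - (n+1) ≠ -1 := by
      have := Finset.mem_range.1 hk; omega
    have h0 := circleIntegral.integral_sub_zpow_of_ne hm 0 0 R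
    simp only [sub_zero] at h0
    rw [h0, smul_zero]

lemma key_bound (r r' : ℝ) (hr'0 : 0 < r') (hrr : r' < r) (h : ℂ → ℂ)
    (ξ : ℂ) (hξ : ‖ξ‖ < r') (C : ℝ) (n : ℕ) (Q Pn : Polynomial ℂ)
    (hPn : Pn.degree < (n : ℕ))
    (hC : ∀ z ∈ Metric.sphere (0:ℂ) r', ‖Polynomial.eval z Q * h z‖ ≤ C)
    (hcont : ContinuousOn h (Metric.sphere (0:ℂ) r'))
    (gn : ℂ → ℂ) (hgn : AnalyticOnNhd ℂ gn (Metric.ball 0 r))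
    (heq : ∀ z ∈ Metric.ball (0:ℂ) r,
      Polynomial.eval z Q * h z - (z - ξ) * Polynomial.eval z Pn = z ^ (n + 1) * gn z) :
    ‖Polynomial.eval ξ Q * h ξ‖ ≤
      (C * r' / (r' - ‖ξ‖)) * (‖ξ‖ / r') ^ (n + 1) := by
  have hξball : ξ ∈ Metric.ball (0:ℂ) r' := by
    simpa using hξ
  have hξr : ξ ∈ Metric.ball (0:ℂ) r := by
    simpa using hξ.trans hrr
  have hsph : Metric.sphere (0:ℂ) r' ⊆ Metric.ball (0:ℂ) r :=
    (sphere_subset_closedBall).trans (closedBall_subset_ball hrr)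
  -- value at ξ
  have hval : Polynomial.eval ξ Q * h ξ = ξ ^ (n + 1) * gn ξ := by
    have := heq ξ hξr; simpa using this
  -- Cauchy integral formula for gn
  have dc : DiffContOnCl ℂ gn (Metric.ball 0 r') := by
    refine ⟨hgn.differentiableOn.mono (ball_subset_ball hrr.le), ?_⟩
    refine hgn.continuousOn.mono ?_
    rw [closure_ball (0:ℂ) hr'0.ne']
    exact closedBall_subset_ball hrr
  have cauchy : (∮ z in C((0:ℂ), r'), (z - ξ)⁻¹ • gn z) = (2 * Real.pi * Complex.I) • gn ξ :=
    dc.circleIntegral_sub_inv_smul hξball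
  set F1 : ℂ → ℂ := fun z => Polynomial.eval z Q * h z * (z ^ (n + 1) * (z - ξ))⁻¹ with hF1
  set F2 : ℂ → ℂ := fun z => Polynomial.eval z Pn * (z ^ (n + 1))⁻¹ with hF2
  have hzsph : ∀ z ∈ Metric.sphere (0:ℂ) r', z ≠ 0 ∧ z ≠ ξ ∧ ‖z‖ = r' := by
    intro z hz
    rw [mem_sphere_iff_norm, sub_zero] at hz
    have habs : ‖z‖ = r' := hz
    refine ⟨?_, ?_, habs⟩
    · intro h0; rw [h0] at habs; simp at habs; exact hr'0.ne habs
    · intro hzz; rw [hzz] at habs; exact (ne_of_lt hξ) habs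
  have hEq : Set.EqOn (fun z => (z - ξ)⁻¹ • gn z) (fun z => F1 z - F2 z)
      (Metric.sphere (0:ℂ) r') := by
    intro z hz
    obtain ⟨hz0, hzξ, _⟩ := hzsph z hz
    have hpow : z ^ (n + 1) ≠ 0 := pow_ne_zero _ hz0
    have hsub : z - ξ ≠ 0 := sub_ne_zero.2 hzξ
    have hgz : gn z = (Polynomial.eval z Q * h z - (z - ξ) * Polynomial.eval z Pn)
        * (z ^ (n + 1))⁻¹ := by
      rw [heq z (hsph hz)]; field_simp
    simp only [smul_eq_mul, hF1, hF2, hgz]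
    field_simp
  -- integrability
  have hcF1 : CircleIntegrable F1 0 r' := by
    apply ContinuousOn.circleIntegrable hr'0.le
    apply ContinuousOn.mul
    · exact Q.continuous.continuousOn.mul hcont
    · apply ContinuousOn.inv₀
      · exact ((continuous_pow (n+1)).continuousOn.mul
          (continuous_id.sub continuous_const).continuousOn)
      · intro z hz
        obtain ⟨hz0, hzξ, _⟩ := hzsph z hz
        exact mul_ne_zero (pow_ne_zero _ hz0) (sub_ne_zero.2 hzξ)
  have hcF2 : CircleIntegrable F2 0 r' := by
    apply ContinuousOn.circleIntegrable hr'0.le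
    apply ContinuousOn.mul
    · exact Pn.continuous.continuousOn
    · apply ContinuousOn.inv₀ (continuous_pow (n+1)).continuousOn
      intro z hz; exact pow_ne_zero _ (hzsph z hz).1
  have hsplit : (∮ z in C((0:ℂ), r'), (z - ξ)⁻¹ • gn z) = ∮ z in C((0:ℂ), r'), F1 z := by
    rw [circleIntegral.integral_congr hr'0.le hEq, circleIntegral.integral_sub hcF1 hcF2,
      aux_zero_int r' hr'0 n Pn hPn, sub_zero]
  -- norm bound on F1
  have hC0 : 0 ≤ C := by
    have hmem : (r' : ℂ) ∈ Metric.sphere (0:ℂ) r' := by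
      simp [mem_sphere_iff_norm, Complex.norm_of_nonneg hr'0.le, abs_of_nonneg hr'0.le]
    exact le_trans (norm_nonneg _) (hC _ hmem)
  have hden : 0 < r' ^ (n + 1) * (r' - ‖ξ‖) :=
    mul_pos (pow_pos hr'0 _) (by linarith)
  set D : ℝ := C / (r' ^ (n + 1) * (r' - ‖ξ‖)) with hD
  have hnormF1 : ∀ z ∈ Metric.sphere (0:ℂ) r', ‖F1 z‖ ≤ D := by
    intro z hz
    obtain ⟨hz0, hzξ, habs⟩ := hzsph z hz
    have h1 : r' - ‖ξ‖ ≤ ‖z - ξ‖ := by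
      have := norm_sub_norm_le z ξ
      simpa [habs] using this
    have hzden : 0 < ‖z‖ ^ (n + 1) * ‖z - ξ‖ := by
      rw [habs]
      exact mul_pos (pow_pos hr'0 _) (lt_of_lt_of_le (by linarith) h1)
    have hnF1 : ‖F1 z‖ = ‖Polynomial.eval z Q * h z‖
        / (‖z‖ ^ (n + 1) * ‖z - ξ‖) := by
      simp [hF1, norm_mul, norm_pow, div_eq_mul_inv]
    rw [hnF1, hD]
    apply div_le_div₀ hC0 (hC z hz) hden
    rw [habs]
    exact mul_le_mul_of_nonneg_left h1 (pow_nonneg hr'0.le _)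
  have hintbound : ‖∮ z in C((0:ℂ), r'), F1 z‖ ≤ 2 * Real.pi * r' * D :=
    circleIntegral.norm_integral_le_of_norm_le_const hr'0.le hnormF1
  have h2pi : ‖(2 * (Real.pi:ℂ) * Complex.I) • gn ξ‖ = 2 * Real.pi * ‖gn ξ‖ := by
    simp [norm_smul, norm_mul, Complex.norm_I, Complex.norm_two,
      Complex.norm_real, Real.norm_eq_abs, abs_of_nonneg Real.pi_pos.le, mul_assoc]
  have hgnb : ‖gn ξ‖ ≤ r' * D := by
    have h1 : 2 * Real.pi * ‖gn ξ‖ ≤ 2 * Real.pi * (r' * D) := by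
      rw [← h2pi]
      calc ‖(2 * (Real.pi:ℂ) * Complex.I) • gn ξ‖
          = ‖∮ z in C((0:ℂ), r'), F1 z‖ := by
            rw [← hsplit, cauchy]
        _ ≤ 2 * Real.pi * r' * D := hintbound
        _ = 2 * Real.pi * (r' * D) := by ring
    exact le_of_mul_le_mul_left h1 (by positivity)
  have hne1 : r' ≠ 0 := hr'0.ne'
  have hne2 : r' - ‖ξ‖ ≠ 0 := by intro h0; linarith [hξ, sub_eq_zero.1 h0]
  calc ‖Polynomial.eval ξ Q * h ξ‖
      = ‖ξ‖ ^ (n + 1) * ‖gn ξ‖ := by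
        rw [hval, norm_mul, norm_pow]
    _ ≤ ‖ξ‖ ^ (n + 1) * (r' * D) :=
        mul_le_mul_of_nonneg_left hgnb (pow_nonneg (norm_nonneg _) _)
    _ = (C * r' / (r' - ‖ξ‖)) * (‖ξ‖ / r') ^ (n + 1) := by
        rw [hD, div_pow]
        field_simp

/-- Let `h` be analytic in a neighborhood of the closed disk of radius `r`, `|ξ| < r`,
`(q_n)` polynomials of degree ≤ `M` with uniformly bounded coefficients, such that for each
`n` the function `z ↦ (q_n(z) h(z) − (z−ξ) P_n(z))/z^{n+1}` is analytic on `D_r` for some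
polynomial `P_n` of degree < `n`. Then `limsup |q_n(ξ) h(ξ)|^{1/n} ≤ |ξ|/r`. -/
theorem stmt7 (r : ℝ) (h : ℂ → ℂ)
    (hh : AnalyticOnNhd ℂ h (Metric.closedBall 0 r))
    (ξ : ℂ) (hξ : ‖ξ‖ < r)
    (M : ℕ) (q : ℕ → Polynomial ℂ) (hdeg : ∀ n, (q n).degree ≤ (M : ℕ))
    (B : ℝ) (hB : ∀ n j, ‖(q n).coeff j‖ ≤ B)
    (P : ℕ → Polynomial ℂ) (hP : ∀ n : ℕ, (P n).degree < (n : ℕ))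
    (g : ℕ → ℂ → ℂ) (hg : ∀ n, AnalyticOnNhd ℂ (g n) (Metric.ball 0 r))
    (heq : ∀ n : ℕ, ∀ z ∈ Metric.ball (0 : ℂ) r,
      (q n).eval z * h z - (z - ξ) * (P n).eval z = z ^ (n + 1) * g n z) :
    Filter.limsup (fun n : ℕ => ‖(q n).eval ξ * h ξ‖ ^ (1 / (n : ℝ)))
      Filter.atTop ≤ ‖ξ‖ / r := by
  have habs0 : (0:ℝ) ≤ ‖ξ‖ := norm_nonneg _
  have hr0 : 0 < r := lt_of_le_of_lt habs0 hξ
  obtain ⟨H, hH⟩ := (isCompact_closedBall (0:ℂ) r).exists_bound_of_continuousOn hh.continuousOn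
  set u : ℕ → ℝ := fun n => ‖(q n).eval ξ * h ξ‖ ^ (1 / (n:ℝ)) with hu
  have hu0 : ∀ n, 0 ≤ u n := fun n => Real.rpow_nonneg (norm_nonneg _) _
  have hbd : Filter.IsBoundedUnder (· ≥ ·) Filter.atTop u :=
    Filter.isBoundedUnder_of ⟨0, fun n => hu0 n⟩
  have hcob : Filter.IsCoboundedUnder (· ≤ ·) Filter.atTop u := hbd.isCoboundedUnder_le
  refine le_of_forall_gt_imp_ge_of_dense fun c hc => ?_
  refine Filter.limsup_le_of_le hcob ?_
  have hc0 : 0 < c := lt_of_le_of_lt (div_nonneg habs0 hr0.le) hc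
  by_cases hξ0 : ξ = 0
  · subst hξ0
    have hz : ∀ n, (q n).eval 0 * h 0 = 0 := by
      intro n
      have h0 := heq n 0 (mem_ball_self hr0)
      simpa using h0
    filter_upwards [Filter.eventually_ge_atTop 1] with n hn
    show u n ≤ c
    rw [hu]
    simp only [hz n, norm_zero]
    rw [Real.zero_rpow (one_div_ne_zero (Nat.cast_ne_zero.2 (by omega)))]
    exact hc0.le
  · have habspos : 0 < ‖ξ‖ := norm_pos_iff.2 hξ0
    set m : ℝ := max (‖ξ‖ / c) (‖ξ‖) with hm
    have hmr : m < r := by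
      rw [hm, max_lt_iff]
      refine ⟨?_, hξ⟩
      rw [div_lt_iff₀ hc0]
      rw [div_lt_iff₀ hr0] at hc
      linarith
    set r' : ℝ := (m + r) / 2 with hr'
    have hm0 : 0 ≤ m := le_trans habs0 (le_max_right _ _)
    have hr'0 : 0 < r' := by rw [hr']; linarith
    have hr'r : r' < r := by rw [hr']; linarith
    have hmr' : m < r' := by rw [hr']; linarith
    have hξr' : ‖ξ‖ < r' := lt_of_le_of_lt (le_max_right _ _) hmr'
    set t : ℝ := ‖ξ‖ / r' with ht
    have ht0 : 0 < t := div_pos habspos hr'0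
    have htc : t < c := by
      rw [ht, div_lt_iff₀ hr'0]
      have h1 : ‖ξ‖ / c < r' := lt_of_le_of_lt (le_max_left _ _) hmr'
      rw [div_lt_iff₀ hc0] at h1
      linarith
    set Cq : ℝ := (M + 1) * B * (max 1 r') ^ M with hCq
    have hqb : ∀ n, ∀ z ∈ Metric.sphere (0:ℂ) r', ‖(q n).eval z‖ ≤ Cq := by
      intro n z hz
      have hns : (q n).natDegree < M + 1 :=
        Nat.lt_succ_of_le (Polynomial.natDegree_le_iff_degree_le.2 (hdeg n))
      have habsz : ‖z‖ = r' := by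
        rw [mem_sphere_iff_norm, sub_zero] at hz; exact hz
      rw [Polynomial.eval_eq_sum_range' hns]
      calc ‖∑ j ∈ Finset.range (M+1), (q n).coeff j * z ^ j‖
          ≤ ∑ j ∈ Finset.range (M+1), ‖(q n).coeff j * z ^ j‖ :=
            norm_sum_le _ _
        _ ≤ ∑ _j ∈ Finset.range (M+1), B * (max 1 r') ^ M := by
            refine Finset.sum_le_sum fun j hj => ?_
            rw [norm_mul, norm_pow, habsz]
            have hj' : j ≤ M := by have := Finset.mem_range.1 hj; omega
            have h1 : r' ^ j ≤ (max 1 r') ^ M :=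
              le_trans (pow_le_pow_left₀ hr'0.le (le_max_right _ _) j)
                (pow_le_pow_right₀ (le_max_left _ _) hj')
            exact mul_le_mul (hB n j) h1 (pow_nonneg hr'0.le _)
              (le_trans (norm_nonneg _) (hB n j))
        _ = Cq := by
            rw [Finset.sum_const, Finset.card_range, hCq, nsmul_eq_mul]
            push_cast; ring
    set C : ℝ := Cq * H with hC'
    have hCb : ∀ n, ∀ z ∈ Metric.sphere (0:ℂ) r', ‖(q n).eval z * h z‖ ≤ C := by
      intro n z hz
      have hzc : z ∈ Metric.closedBall (0:ℂ) r := by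
        rw [mem_sphere_iff_norm, sub_zero] at hz
        rw [Metric.mem_closedBall, Complex.dist_eq, sub_zero]
        rw [show ‖z‖ = ‖z‖ from rfl, hz]
        exact hr'r.le
      rw [norm_mul]
      exact mul_le_mul (hqb n z hz) (hH z hzc)
        (norm_nonneg _)
        (le_trans (norm_nonneg _) (hqb n z hz))
    set K : ℝ := max 1 (C * r' / (r' - ‖ξ‖)) with hK
    have hK1 : (1:ℝ) ≤ K := le_max_left _ _
    have hsphsub : Metric.sphere (0:ℂ) r' ⊆ Metric.closedBall (0:ℂ) r :=
      (Metric.sphere_subset_closedBall).trans (Metric.closedBall_subset_closedBall hr'r.le)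
    have han : ∀ n, ‖(q n).eval ξ * h ξ‖ ≤ K * t ^ (n+1) := by
      intro n
      have hkb := key_bound r r' hr'0 hr'r h ξ hξr' C n (q n) (P n) (hP n) (hCb n)
        (hh.continuousOn.mono hsphsub) (g n) (hg n) (heq n)
      refine le_trans hkb ?_
      exact mul_le_mul_of_nonneg_right (le_max_right _ _)
        (pow_nonneg (div_nonneg habs0 hr'0.le) _)
    have hKt0 : 0 < K * t := mul_pos (lt_of_lt_of_le one_pos hK1) ht0
    have htend : Filter.Tendsto (fun n : ℕ => (K * t) ^ (1/(n:ℝ)) * t)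
        Filter.atTop (nhds t) := by
      have h2 : Filter.Tendsto (fun n : ℕ => Real.log (K*t) * (1/(n:ℝ)))
          Filter.atTop (nhds 0) := by
        simpa using tendsto_one_div_atTop_nhds_zero_nat.const_mul (Real.log (K*t))
      have h3 := (Real.continuous_exp.tendsto 0).comp h2
      simp only [Real.exp_zero] at h3
      have h1 : Filter.Tendsto (fun n : ℕ => (K * t) ^ (1/(n:ℝ))) Filter.atTop (nhds 1) := by
        refine h3.congr fun n => ?_
        simp only [Function.comp_apply]
        rw [Real.rpow_def_of_pos hKt0]
      simpa using h1.mul tendsto_const_nhds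
    filter_upwards [htend.eventually_le_const htc, Filter.eventually_ge_atTop 1] with n hn1 hn2
    have hn0 : (n:ℝ) ≠ 0 := Nat.cast_ne_zero.2 (by omega)
    show u n ≤ c
    calc u n ≤ (K * t ^ (n+1)) ^ (1/(n:ℝ)) :=
          Real.rpow_le_rpow (norm_nonneg _) (han n)
            (by positivity)
      _ = (K * t) ^ (1/(n:ℝ)) * t := by
          rw [show K * t ^ (n+1) = (K*t) * t^n by ring]
          rw [Real.mul_rpow hKt0.le (pow_nonneg ht0.le _)]
          congr 1
          rw [← Real.rpow_natCast t n, ← Real.rpow_mul ht0.le]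
          rw [mul_one_div, div_self hn0, Real.rpow_one]
      _ ≤ c := hn1
end

section
/- Let Q and Q_n (n ∈ ℕ) be polynomials of degree at most M, let g be analytic on the annulus r₀ < |z| ≤ r (more precisely, on a neighborhood of the circle |z| = r), and define c_n = (1/2πi)∫_{|ω|=r} (Q(ω) − Q_n(ω)) g(ω)/ω^{n+1} dω. If limsup_n ‖Q − Q_n‖^{1/n} = θ' (coefficient norm), then limsup_n |c_n|^{1/n} ≤ θ'/r. -/
open Filter Polynomial ENNReal Topology

set_option maxHeartbeats 1000000

/-- Let `Q`, `Q_n` be polynomials of degree ≤ `M`, `g` continuous on the circle `|ω| = r`,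
and `c_n = (1/2πi)∮_{|ω|=r} (Q(ω) − Q_n(ω)) g(ω)/ω^{n+1} dω`. If
`limsup ‖Q − Q_n‖^{1/n} = θ'` (coefficient norm), then `limsup |c_n|^{1/n} ≤ θ'/r`. -/
theorem stmt8 (M : ℕ) (Q : Polynomial ℂ) (Qn : ℕ → Polynomial ℂ)
    (hQ : Q.degree ≤ (M : ℕ)) (hQn : ∀ n, (Qn n).degree ≤ (M : ℕ))
    (r : ℝ) (hr : 0 < r) (g : ℂ → ℂ) (hg : ContinuousOn g (Metric.sphere 0 r))
    (c : ℕ → ℂ)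
    (hc : ∀ n : ℕ, c n = (2 * Real.pi * Complex.I)⁻¹ •
      (∮ ω in C(0, r), (Q.eval ω - (Qn n).eval ω) * g ω / ω ^ (n + 1)))
    (θ' : ℝ≥0∞)
    (hθ : Filter.limsup (fun n : ℕ =>
        (ENNReal.ofReal (∑ j ∈ Finset.range (M + 1), ‖(Q - Qn n).coeff j‖))
          ^ (1 / (n : ℝ))) Filter.atTop = θ') :
    Filter.limsup (fun n : ℕ => (‖c n‖₊ : ℝ≥0∞) ^ (1 / (n : ℝ))) Filter.atTop
      ≤ θ' / ENNReal.ofReal r := by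
  -- notation
  set S : ℕ → ℝ := fun n => ∑ j ∈ Finset.range (M + 1), ‖(Q - Qn n).coeff j‖ with hS
  have hS0 : ∀ n, 0 ≤ S n := fun n => Finset.sum_nonneg fun j _ => norm_nonneg _
  -- bound for g on the sphere
  obtain ⟨G, hG⟩ := (isCompact_sphere (0 : ℂ) r).exists_bound_of_continuousOn hg
  have hmemr : (r : ℂ) ∈ Metric.sphere (0 : ℂ) r := by
    simp [Complex.norm_real, abs_of_pos hr]
  have hG0 : 0 ≤ G := le_trans (norm_nonneg _) (hG _ hmemr)
  set B : ℝ := max 1 r ^ M with hB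
  have hB1 : (1 : ℝ) ≤ B := one_le_pow₀ (le_max_left _ _)
  set K : ℝ := max (B * G) 1 with hK
  have hK1 : (1 : ℝ) ≤ K := le_max_right _ _
  have hK0 : (0 : ℝ) < K := lt_of_lt_of_le one_pos hK1
  -- Step A: the norm bound on c n
  have hbound : ∀ n : ℕ, ‖c n‖ ≤ K * S n / r ^ n := by
    intro n
    have hdeg : (Q - Qn n).degree ≤ (M : ℕ) :=
      (Polynomial.degree_sub_le _ _).trans (max_le hQ (hQn n))
    have hnat : (Q - Qn n).natDegree < M + 1 :=
      Nat.lt_succ_of_le (Polynomial.natDegree_le_iff_degree_le.2 hdeg)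
    -- pointwise bound on the integrand
    have hpt : ∀ ω ∈ Metric.sphere (0 : ℂ) r,
        ‖(Q.eval ω - (Qn n).eval ω) * g ω / ω ^ (n + 1)‖ ≤ K * S n / r ^ (n + 1) := by
      intro ω hω
      have hωr : ‖ω‖ = r := by simpa using hω
      have heval : ‖Q.eval ω - (Qn n).eval ω‖ ≤ S n * B := by
        have : Q.eval ω - (Qn n).eval ω = (Q - Qn n).eval ω := by simp
        rw [this, Polynomial.eval_eq_sum_range' hnat]
        calc ‖∑ i ∈ Finset.range (M + 1), (Q - Qn n).coeff i * ω ^ i‖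
            ≤ ∑ i ∈ Finset.range (M + 1), ‖(Q - Qn n).coeff i * ω ^ i‖ :=
              norm_sum_le _ _
          _ ≤ ∑ i ∈ Finset.range (M + 1), ‖(Q - Qn n).coeff i‖ * B := by
              refine Finset.sum_le_sum fun i hi => ?_
              rw [norm_mul, norm_pow, hωr]
              refine mul_le_mul_of_nonneg_left ?_ (norm_nonneg _)
              calc r ^ i ≤ max 1 r ^ i := by
                    exact pow_le_pow_left₀ hr.le (le_max_right _ _) i
                _ ≤ B := pow_le_pow_right₀ (le_max_left _ _)
                    (Nat.le_of_lt_succ (Finset.mem_range.1 hi))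
          _ = S n * B := by rw [← Finset.sum_mul]
      have hgb : ‖g ω‖ ≤ G := hG ω hω
      have hωn : ‖ω ^ (n + 1)‖ = r ^ (n + 1) := by rw [norm_pow, hωr]
      rw [norm_div, hωn, norm_mul]
      have hnum : ‖Q.eval ω - (Qn n).eval ω‖ * ‖g ω‖ ≤ K * S n :=
        calc ‖Q.eval ω - (Qn n).eval ω‖ * ‖g ω‖ ≤ S n * B * G :=
              mul_le_mul heval hgb (norm_nonneg _) (mul_nonneg (hS0 n) (one_pos.le.trans hB1))
          _ ≤ S n * K := by
              rw [mul_assoc]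
              exact mul_le_mul_of_nonneg_left (le_max_left _ _) (hS0 n)
          _ = K * S n := mul_comm _ _
      gcongr
    have hint : ‖∮ ω in C(0, r), (Q.eval ω - (Qn n).eval ω) * g ω / ω ^ (n + 1)‖ ≤
        2 * Real.pi * r * (K * S n / r ^ (n + 1)) :=
      circleIntegral.norm_integral_le_of_norm_le_const hr.le hpt
    have hnorm : ‖(2 * (Real.pi : ℂ) * Complex.I)⁻¹‖ = (2 * Real.pi)⁻¹ := by
      rw [norm_inv, norm_mul, norm_mul, Complex.norm_I, mul_one]
      norm_num [Complex.norm_real, abs_of_nonneg Real.pi_nonneg]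
    rw [hc n, norm_smul]
    rw [hnorm]
    have hpi : (0 : ℝ) < 2 * Real.pi := Real.two_pi_pos
    calc (2 * Real.pi)⁻¹ * ‖∮ ω in C(0, r), (Q.eval ω - (Qn n).eval ω) * g ω / ω ^ (n + 1)‖
        ≤ (2 * Real.pi)⁻¹ * (2 * Real.pi * r * (K * S n / r ^ (n + 1))) :=
          mul_le_mul_of_nonneg_left hint (by positivity)
      _ = K * S n / r ^ n := by
          field_simp
          ring
  -- Step B: eventual ENNReal bound after taking n-th roots
  set ρ : ℝ≥0∞ := ENNReal.ofReal r with hρ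
  have hρ0 : ρ ≠ 0 := (ENNReal.ofReal_pos.2 hr).ne'
  have hρtop : ρ ≠ ⊤ := ENNReal.ofReal_ne_top
  set a : ℕ → ℝ≥0∞ := fun n => (ENNReal.ofReal K) ^ (1 / (n : ℝ)) with ha
  set v : ℕ → ℝ≥0∞ := fun n => (ENNReal.ofReal (S n)) ^ (1 / (n : ℝ)) with hv
  have hev : ∀ᶠ n : ℕ in atTop, (‖c n‖₊ : ℝ≥0∞) ^ (1 / (n : ℝ)) ≤ ρ⁻¹ * (a n * v n) := by
    filter_upwards [eventually_ge_atTop 1] with n hn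
    have hn0 : (n : ℝ) ≠ 0 := Nat.cast_ne_zero.2 (by omega)
    have h1 : (‖c n‖₊ : ℝ≥0∞) ≤ (ENNReal.ofReal K * ENNReal.ofReal (S n)) / ρ ^ n := by
      rw [← ENNReal.ofReal_coe_nnreal, coe_nnnorm, ← ENNReal.ofReal_mul hK0.le, hρ,
        ← ENNReal.ofReal_pow hr.le, ← ENNReal.ofReal_div_of_pos (pow_pos hr n)]
      exact ENNReal.ofReal_le_ofReal (hbound n)
    have h2 := ENNReal.rpow_le_rpow h1 (by positivity : (0:ℝ) ≤ 1 / (n:ℝ))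
    calc (‖c n‖₊ : ℝ≥0∞) ^ (1 / (n : ℝ))
        ≤ ((ENNReal.ofReal K * ENNReal.ofReal (S n)) / ρ ^ n) ^ (1 / (n : ℝ)) := h2
      _ = ρ⁻¹ * (a n * v n) := by
          rw [ENNReal.div_rpow_of_nonneg _ _ (by positivity),
            ENNReal.mul_rpow_of_nonneg _ _ (by positivity),
            ← ENNReal.rpow_natCast ρ n, ← ENNReal.rpow_mul,
            mul_one_div_cancel hn0, ENNReal.rpow_one, div_eq_mul_inv, mul_comm]
  -- limsup of a is 1
  have haT : Tendsto a atTop (𝓝 1) := by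
    have h1 : Tendsto (fun n : ℕ => K ^ (1 / (n : ℝ))) atTop (𝓝 1) := by
      have := (Real.continuousAt_rpow (K, 0) (Or.inl hK0.ne')).tendsto.comp
        ((tendsto_const_nhds (x := K)).prodMk_nhds tendsto_one_div_atTop_nhds_zero_nat)
      simpa [Real.rpow_zero, Function.comp_def] using this
    have h2 : Tendsto (fun n : ℕ => ENNReal.ofReal (K ^ (1 / (n : ℝ)))) atTop
        (𝓝 (ENNReal.ofReal 1)) := (ENNReal.continuous_ofReal.tendsto _).comp h1
    simp only [ENNReal.ofReal_one] at h2
    exact h2.congr fun n => (ENNReal.ofReal_rpow_of_pos hK0).symm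
  have hlima : limsup a atTop = 1 := haT.limsup_eq
  -- put everything together
  calc limsup (fun n : ℕ => (‖c n‖₊ : ℝ≥0∞) ^ (1 / (n : ℝ))) atTop
      ≤ limsup (fun n => ρ⁻¹ * (a n * v n)) atTop := limsup_le_limsup hev
    _ = ρ⁻¹ * limsup (fun n => a n * v n) atTop :=
        ENNReal.limsup_const_mul_of_ne_top (by simp [hρ0])
    _ ≤ ρ⁻¹ * (limsup a atTop * limsup v atTop) := by
        refine mul_le_mul_right ?_ _
        exact ENNReal.limsup_mul_le' (Or.inl (by simp [hlima])) (Or.inl (by simp [hlima]))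
    _ = θ' / ρ := by rw [hlima, one_mul, hθ, div_eq_mul_inv, mul_comm]
end

section
/- Let f be a formal power series that is not a polynomial, and suppose for each sufficiently large n there exist polynomials p̃_n, q̃_n with deg p̃_n ≤ n − m*, deg q̃_n ≤ m, q̃_n ≢ 0, such that q̃_n f − p̃_n vanishes to order ≥ n+1 at 0, and suppose q̃_n → q̃ (coefficient-wise) where q̃ is a polynomial of exact degree m with q̃(0) ≠ 0. Then 0 < R₀(f) < ∞, where R₀(f) is the radius of convergence of f. -/
open Filter Polynomial PowerSeries ENNReal

/-- Let `f = Σ φ_n z^n` be a formal power series that is not a polynomial, and suppose for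
each `n ≥ n₀` there are polynomials `p̃_n, q̃_n` with `deg p̃_n ≤ n − m*`, `deg q̃_n ≤ m`,
`q̃_n ≠ 0`, such that `q̃_n f − p̃_n` vanishes to order ≥ `n+1` at `0`, and `q̃_n → q̃`
coefficient-wise, where `q̃` has exact degree `m` and `q̃(0) ≠ 0`. Then `0 < R₀(f) < ∞`,
i.e. `0 < limsup |φ_n|^{1/n} < ∞`. -/
theorem stmt12 (φ : ℕ → ℂ) (hnotpoly : ¬ ∃ N : ℕ, ∀ n, N ≤ n → φ n = 0)
    (m mstar : ℕ) (h1 : 1 ≤ mstar) (h2 : mstar ≤ m)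
    (p q : ℕ → Polynomial ℂ) (n₀ : ℕ)
    (hp : ∀ n, n₀ ≤ n → (p n).degree ≤ ((n - mstar : ℕ) : ℕ))
    (hq : ∀ n, n₀ ≤ n → (q n).degree ≤ (m : ℕ) ∧ q n ≠ 0)
    (hvan : ∀ n, n₀ ≤ n → ∀ j, j ≤ n →
      (PowerSeries.coeff (R := ℂ) j)
        ((q n : PowerSeries ℂ) * PowerSeries.mk φ - (p n : PowerSeries ℂ)) = 0)
    (Q : Polynomial ℂ) (hQdeg : Q.natDegree = m) (hQ0 : Q.coeff 0 ≠ 0)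
    (hconv : ∀ j, Filter.Tendsto (fun n => (q n).coeff j) Filter.atTop (nhds (Q.coeff j))) :
    0 < Filter.limsup (fun n : ℕ => (‖φ n‖₊ : ℝ≥0∞) ^ (1 / (n : ℝ))) Filter.atTop ∧
    Filter.limsup (fun n : ℕ => (‖φ n‖₊ : ℝ≥0∞) ^ (1 / (n : ℝ))) Filter.atTop < ⊤ := by
  have hm1 : 1 ≤ m := le_trans h1 h2
  have hQne : Q ≠ 0 := fun h => hQ0 (by simp [h])
  have hQm : Q.coeff m ≠ 0 := by
    rw [← hQdeg, Polynomial.coeff_natDegree]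
    exact Polynomial.leadingCoeff_ne_zero.mpr hQne
  -- the key coefficient identity
  set N : ℕ := max n₀ (m + 1) with hNdef
  have key : ∀ n, N ≤ n → ∑ k ∈ Finset.range (m + 1), (q n).coeff k * φ (n - k) = 0 := by
    intro n hn
    have hn₀ : n₀ ≤ n := le_trans (le_max_left _ _) hn
    have hmn : m + 1 ≤ n := le_trans (le_max_right _ _) hn
    have h0 := hvan n hn₀ n le_rfl
    rw [map_sub, sub_eq_zero] at h0
    have hpn : (PowerSeries.coeff (R := ℂ) n) ((p n : PowerSeries ℂ)) = 0 := by
      rw [Polynomial.coeff_coe]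
      apply Polynomial.coeff_eq_zero_of_degree_lt
      refine lt_of_le_of_lt (hp n hn₀) ?_
      exact_mod_cast Nat.sub_lt (by omega) h1
    have hmul : (PowerSeries.coeff (R := ℂ) n) ((q n : PowerSeries ℂ) * PowerSeries.mk φ)
        = ∑ k ∈ Finset.range (n + 1), (q n).coeff k * φ (n - k) := by
      rw [PowerSeries.coeff_mul, Finset.Nat.sum_antidiagonal_eq_sum_range_succ_mk]
      simp [Polynomial.coeff_coe]
    rw [hmul, hpn] at h0
    rw [← h0]
    apply Finset.sum_subset (Finset.range_subset_range.mpr (by omega))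
    intro k hk hk'
    have hkm : m < k := by
      simp only [Finset.mem_range] at hk hk'
      omega
    have hz : (q n).coeff k = 0 :=
      Polynomial.coeff_eq_zero_of_degree_lt
        (lt_of_le_of_lt (hq n hn₀).1 (by exact_mod_cast hkm))
    simp [hz]
  -- constants
  set c0 : ℝ := ‖Q.coeff 0‖ / 2 with hc0def
  have hc0 : 0 < c0 := half_pos (norm_pos_iff.mpr hQ0)
  set cm : ℝ := ‖Q.coeff m‖ / 2 with hcmdef
  have hcm : 0 < cm := half_pos (norm_pos_iff.mpr hQm)
  set K : ℝ := 1 + ∑ k ∈ Finset.range (m + 1), ‖Q.coeff k‖ with hKdef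
  have hK1 : 1 ≤ K :=
    le_add_of_nonneg_right (Finset.sum_nonneg fun _ _ => norm_nonneg _)
  have hK0 : 0 ≤ K := le_trans zero_le_one hK1
  have hKk : ∀ k ∈ Finset.range (m + 1), ‖Q.coeff k‖ + 1 ≤ K := by
    intro k hk
    have := Finset.single_le_sum (f := fun k => ‖Q.coeff k‖)
      (fun i _ => norm_nonneg _) hk
    rw [hKdef]; linarith
  -- eventual bounds on q-coefficients
  have hev : ∀ᶠ n in atTop, c0 ≤ ‖(q n).coeff 0‖ ∧ cm ≤ ‖(q n).coeff m‖ ∧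
      ∀ k ∈ Finset.range (m + 1), ‖(q n).coeff k‖ ≤ K := by
    have e0 : ∀ᶠ n in atTop, c0 ≤ ‖(q n).coeff 0‖ :=
      ((hconv 0).norm).eventually (eventually_ge_nhds (half_lt_self (norm_pos_iff.mpr hQ0)))
    have em' : ∀ᶠ n in atTop, cm ≤ ‖(q n).coeff m‖ :=
      ((hconv m).norm).eventually (eventually_ge_nhds (half_lt_self (norm_pos_iff.mpr hQm)))
    have eK : ∀ᶠ n in atTop, ∀ k ∈ Finset.range (m + 1), ‖(q n).coeff k‖ ≤ K := by
      rw [Filter.eventually_all_finset]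
      intro k hk
      exact ((hconv k).norm).eventually
        (eventually_le_nhds (lt_of_lt_of_le (lt_add_one _) (hKk k hk)))
    exact e0.and (em'.and eK)
  obtain ⟨N₂, hN₂⟩ := eventually_atTop.mp hev
  -- forward recursion
  have fwd : ∀ n, max N N₂ ≤ n →
      c0 * ‖φ n‖ ≤ ∑ i ∈ Finset.range m, K * ‖φ (n - (i + 1))‖ := by
    intro n hn
    have hkey := key n (le_trans (le_max_left _ _) hn)
    obtain ⟨hb0, hbm, hbK⟩ := hN₂ n (le_trans (le_max_right _ _) hn)
    rw [Finset.sum_range_succ'] at hkey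
    simp only [Nat.sub_zero] at hkey
    have h0 : (q n).coeff 0 * φ n
        = -∑ i ∈ Finset.range m, (q n).coeff (i + 1) * φ (n - (i + 1)) :=
      eq_neg_of_add_eq_zero_right hkey
    calc c0 * ‖φ n‖ ≤ ‖(q n).coeff 0‖ * ‖φ n‖ :=
          mul_le_mul_of_nonneg_right hb0 (norm_nonneg _)
      _ = ‖(q n).coeff 0 * φ n‖ := (norm_mul _ _).symm
      _ = ‖∑ i ∈ Finset.range m, (q n).coeff (i + 1) * φ (n - (i + 1))‖ := by
          rw [h0, norm_neg]
      _ ≤ ∑ i ∈ Finset.range m, ‖(q n).coeff (i + 1) * φ (n - (i + 1))‖ :=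
          norm_sum_le _ _
      _ ≤ ∑ i ∈ Finset.range m, K * ‖φ (n - (i + 1))‖ := by
          apply Finset.sum_le_sum
          intro i hi
          rw [norm_mul]
          refine mul_le_mul_of_nonneg_right (hbK (i + 1) ?_) (norm_nonneg _)
          simp only [Finset.mem_range] at hi ⊢
          omega
  -- backward recursion
  have bwd : ∀ n, max N N₂ ≤ n →
      cm * ‖φ (n - m)‖ ≤ ∑ k ∈ Finset.range m, K * ‖φ (n - k)‖ := by
    intro n hn
    have hkey := key n (le_trans (le_max_left _ _) hn)
    obtain ⟨hb0, hbm, hbK⟩ := hN₂ n (le_trans (le_max_right _ _) hn)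
    rw [Finset.sum_range_succ] at hkey
    have h0 : (q n).coeff m * φ (n - m)
        = -∑ k ∈ Finset.range m, (q n).coeff k * φ (n - k) := by
      linear_combination hkey
    calc cm * ‖φ (n - m)‖ ≤ ‖(q n).coeff m‖ * ‖φ (n - m)‖ :=
          mul_le_mul_of_nonneg_right hbm (norm_nonneg _)
      _ = ‖(q n).coeff m * φ (n - m)‖ := (norm_mul _ _).symm
      _ = ‖∑ k ∈ Finset.range m, (q n).coeff k * φ (n - k)‖ := by
          rw [h0, norm_neg]
      _ ≤ ∑ k ∈ Finset.range m, ‖(q n).coeff k * φ (n - k)‖ := norm_sum_le _ _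
      _ ≤ ∑ k ∈ Finset.range m, K * ‖φ (n - k)‖ := by
          apply Finset.sum_le_sum
          intro k hk
          rw [norm_mul]
          refine mul_le_mul_of_nonneg_right (hbK k ?_) (norm_nonneg _)
          simp only [Finset.mem_range] at hk ⊢
          omega
  have hN1 : 1 ≤ N := le_trans (by omega) (le_max_right n₀ (m + 1))
  -- global geometric upper bound
  set D : ℝ := K * m / c0 + 1 with hDdef
  have hD1 : 1 ≤ D := le_add_of_nonneg_left (by positivity)
  have hD0 : 0 < D := lt_of_lt_of_le one_pos hD1
  set A : ℝ := 1 + ∑ j ∈ Finset.range (max N N₂), ‖φ j‖ with hAdef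
  have hA1 : 1 ≤ A := le_add_of_nonneg_right (Finset.sum_nonneg fun _ _ => norm_nonneg _)
  have hA0 : 0 < A := lt_of_lt_of_le one_pos hA1
  have hAj : ∀ j, j < max N N₂ → ‖φ j‖ ≤ A := by
    intro j hj
    have := Finset.single_le_sum (f := fun j => ‖φ j‖)
      (fun i _ => norm_nonneg _) (Finset.mem_range.mpr hj)
    rw [hAdef]; linarith
  have hbound : ∀ n, ‖φ n‖ ≤ A * D ^ n := by
    intro n
    induction n using Nat.strong_induction_on with
    | _ n ih =>
      by_cases hn : max N N₂ ≤ n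
      · have hf := fwd n hn
        have hn1 : 1 ≤ n := le_trans hN1 (le_trans (le_max_left _ _) hn)
        have hsum : ∑ i ∈ Finset.range m, K * ‖φ (n - (i + 1))‖
            ≤ m * (K * (A * D ^ (n - 1))) := by
          calc ∑ i ∈ Finset.range m, K * ‖φ (n - (i + 1))‖
              ≤ ∑ _i ∈ Finset.range m, K * (A * D ^ (n - 1)) := by
                apply Finset.sum_le_sum
                intro i _
                have hlt : n - (i + 1) < n := by omega
                have h2 : A * D ^ (n - (i + 1)) ≤ A * D ^ (n - 1) :=
                  mul_le_mul_of_nonneg_left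
                    (pow_le_pow_right₀ hD1 (by omega)) (le_of_lt hA0)
                exact mul_le_mul_of_nonneg_left (le_trans (ih _ hlt) h2) hK0
            _ = m * (K * (A * D ^ (n - 1))) := by
                rw [Finset.sum_const, Finset.card_range, nsmul_eq_mul]
        have h3 : c0 * ‖φ n‖ ≤ m * (K * (A * D ^ (n - 1))) := le_trans hf hsum
        have h4 : ‖φ n‖ ≤ (K * m / c0) * (A * D ^ (n - 1)) := by
          rw [div_mul_eq_mul_div, le_div_iff₀ hc0]
          nlinarith [h3]
        calc ‖φ n‖ ≤ (K * m / c0) * (A * D ^ (n - 1)) := h4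
          _ ≤ D * (A * D ^ (n - 1)) := by
              refine mul_le_mul_of_nonneg_right ?_ (by positivity)
              rw [hDdef]; linarith
          _ = A * D ^ (n - 1 + 1) := by ring
          _ = A * D ^ n := by rw [Nat.sub_add_cancel hn1]
      · calc ‖φ n‖ ≤ A := hAj n (not_le.mp hn)
          _ ≤ A * D ^ n := le_mul_of_one_le_right (le_of_lt hA0) (by simpa using pow_le_pow_right₀ hD1 (Nat.zero_le n))
  -- finiteness of the limsup
  have hfin : Filter.limsup (fun n : ℕ => (‖φ n‖₊ : ℝ≥0∞) ^ (1 / (n : ℝ))) Filter.atTop < ⊤ := by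
    have hle : ∀ᶠ n : ℕ in atTop,
        (‖φ n‖₊ : ℝ≥0∞) ^ (1 / (n : ℝ)) ≤ ENNReal.ofReal (A * D) := by
      rw [eventually_atTop]
      refine ⟨1, fun n hn => ?_⟩
      have hn0 : (n : ℝ) ≠ 0 := by positivity
      have hAD : ‖φ n‖ ≤ (A * D) ^ n := by
        calc ‖φ n‖ ≤ A * D ^ n := hbound n
          _ ≤ A ^ n * D ^ n :=
              mul_le_mul_of_nonneg_right (le_self_pow₀ hA1 (by omega)) (by positivity)
          _ = (A * D) ^ n := (mul_pow _ _ _).symm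
      have h2 : (‖φ n‖₊ : ℝ≥0∞) ≤ (ENNReal.ofReal (A * D)) ^ n := by
        rw [← ENNReal.ofReal_coe_nnreal, coe_nnnorm, ← ENNReal.ofReal_pow (by positivity)]
        exact ENNReal.ofReal_le_ofReal hAD
      calc (‖φ n‖₊ : ℝ≥0∞) ^ (1 / (n : ℝ))
          ≤ ((ENNReal.ofReal (A * D)) ^ n) ^ (1 / (n : ℝ)) :=
            ENNReal.rpow_le_rpow h2 (by positivity)
        _ = ENNReal.ofReal (A * D) := by
            rw [← ENNReal.rpow_natCast, ← ENNReal.rpow_mul, mul_one_div,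
              div_self hn0, ENNReal.rpow_one]
    exact lt_of_le_of_lt (limsup_le_of_le (by isBoundedDefault) hle) ENNReal.ofReal_lt_top
  -- positivity of the limsup
  have hpos : 0 < Filter.limsup (fun n : ℕ => (‖φ n‖₊ : ℝ≥0∞) ^ (1 / (n : ℝ))) Filter.atTop := by
    by_contra hcon
    push_neg at hcon
    have hls : Filter.limsup (fun n : ℕ => (‖φ n‖₊ : ℝ≥0∞) ^ (1 / (n : ℝ))) Filter.atTop = 0 :=
      le_antisymm hcon bot_le
    set C2 : ℝ := K * m / cm with hC2def
    have hC2 : 0 ≤ C2 := by positivity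
    set ρ : ℝ := 1 / (2 * (C2 + 1)) with hρdef
    have hρ : 0 < ρ := by positivity
    have hρ1 : ρ ≤ 1 := by
      rw [hρdef]
      rw [div_le_one (by positivity)]
      linarith
    have hC2ρ : C2 * ρ ≤ 1 / 2 := by
      rw [hρdef, mul_one_div, div_le_div_iff₀ (by positivity) (by norm_num)]
      linarith
    have hsm : ∀ᶠ n : ℕ in atTop,
        (‖φ n‖₊ : ℝ≥0∞) ^ (1 / (n : ℝ)) < ENNReal.ofReal ρ := by
      exact Filter.eventually_lt_of_limsup_lt (by rw [hls]; exact ENNReal.ofReal_pos.mpr hρ)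
    obtain ⟨N₄, hN₄⟩ := eventually_atTop.mp hsm
    have hsmall : ∀ n, max N₄ 1 ≤ n → ‖φ n‖ ≤ ρ ^ n := by
      intro n hn
      have hn1 : 1 ≤ n := le_trans (le_max_right _ _) hn
      have hn0 : (n : ℝ) ≠ 0 := by positivity
      have ha : (‖φ n‖₊ : ℝ≥0∞) ^ (1 / (n : ℝ)) ≤ ENNReal.ofReal ρ :=
        (hN₄ n (le_trans (le_max_left _ _) hn)).le
      have h2 : ((‖φ n‖₊ : ℝ≥0∞) ^ (1 / (n : ℝ))) ^ (n : ℝ)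
          ≤ (ENNReal.ofReal ρ) ^ (n : ℝ) := ENNReal.rpow_le_rpow ha (by positivity)
      rw [← ENNReal.rpow_mul, one_div_mul_cancel hn0, ENNReal.rpow_one,
        ENNReal.rpow_natCast, ← ENNReal.ofReal_pow hρ.le,
        ← ENNReal.ofReal_coe_nnreal, coe_nnnorm] at h2
      exact (ENNReal.ofReal_le_ofReal_iff (by positivity)).mp h2
    set N₅ : ℕ := max (max N N₂) (max N₄ 1) with hN₅def
    have iter : ∀ t : ℕ, ∀ j, N₅ ≤ j → ‖φ j‖ ≤ (1 / 2) ^ t * ρ ^ j := by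
      intro t
      induction t with
      | zero =>
        intro j hj
        simpa using hsmall j (le_trans (le_max_right _ _) hj)
      | succ t iht =>
        intro j hj
        have hjN : max N N₂ ≤ j := le_trans (le_max_left _ _) hj
        have hb := bwd (j + m) (le_trans hjN (Nat.le_add_right _ _))
        rw [Nat.add_sub_cancel] at hb
        have hsum : ∑ k ∈ Finset.range m, K * ‖φ (j + m - k)‖
            ≤ m * (K * ((1 / 2) ^ t * ρ ^ (j + 1))) := by
          calc ∑ k ∈ Finset.range m, K * ‖φ (j + m - k)‖
              ≤ ∑ _k ∈ Finset.range m, K * ((1 / 2) ^ t * ρ ^ (j + 1)) := by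
                apply Finset.sum_le_sum
                intro k hk
                have hkm : k < m := Finset.mem_range.mp hk
                have hidx : N₅ ≤ j + m - k := by omega
                have hA1' := iht (j + m - k) hidx
                have hpow : ρ ^ (j + m - k) ≤ ρ ^ (j + 1) :=
                  pow_le_pow_of_le_one hρ.le hρ1 (by omega)
                have : ‖φ (j + m - k)‖ ≤ (1 / 2) ^ t * ρ ^ (j + 1) :=
                  le_trans hA1' (mul_le_mul_of_nonneg_left hpow (by positivity))
                exact mul_le_mul_of_nonneg_left this hK0
            _ = m * (K * ((1 / 2) ^ t * ρ ^ (j + 1))) := by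
                rw [Finset.sum_const, Finset.card_range, nsmul_eq_mul]
        have h3 : cm * ‖φ j‖ ≤ m * (K * ((1 / 2) ^ t * ρ ^ (j + 1))) := le_trans hb hsum
        have hcmC2 : cm * C2 = K * m := by
          rw [hC2def, mul_comm, div_mul_cancel₀ _ hcm.ne']
        have h4 : ‖φ j‖ ≤ (C2 * ρ) * ((1 / 2) ^ t * ρ ^ j) := by
          rw [← mul_le_mul_iff_right₀ hcm]
          calc cm * ‖φ j‖ ≤ m * (K * ((1 / 2) ^ t * ρ ^ (j + 1))) := h3
            _ = cm * ((C2 * ρ) * ((1 / 2) ^ t * ρ ^ j)) := by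
                rw [pow_succ]
                linear_combination (-((1 / 2 : ℝ) ^ t * ρ ^ j * ρ)) * hcmC2
        calc ‖φ j‖ ≤ (C2 * ρ) * ((1 / 2) ^ t * ρ ^ j) := h4
          _ ≤ (1 / 2) * ((1 / 2) ^ t * ρ ^ j) :=
              mul_le_mul_of_nonneg_right hC2ρ (by positivity)
          _ = (1 / 2) ^ (t + 1) * ρ ^ j := by ring
    have hzero : ∀ j, N₅ ≤ j → φ j = 0 := by
      intro j hj
      have ht : Tendsto (fun t : ℕ => (1 / 2 : ℝ) ^ t * ρ ^ j) atTop (nhds 0) := by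
        have h := tendsto_pow_atTop_nhds_zero_of_lt_one
          (by norm_num : (0:ℝ) ≤ 1 / 2) (by norm_num : (1 / 2 : ℝ) < 1)
        simpa using h.mul_const (ρ ^ j)
      have hle0 : ‖φ j‖ ≤ 0 :=
        ge_of_tendsto ht (Filter.Eventually.of_forall fun t => iter t j hj)
      simpa using le_antisymm hle0 (norm_nonneg _)
    exact hnotpoly ⟨N₅, hzero⟩
  exact ⟨hpos, hfin⟩
end

section
/- Let d ≥ 1, let f_1, ..., f_d be formal power series, and suppose there exist complex constants c_1, ..., c_d, not all zero, such that Σ_k c_k f_k is a polynomial. Then for each sufficiently large n, there exists a nonzero polynomial Q_n with deg Q_n ≤ d − 1 and polynomials P_{n,k} with deg P_{n,k} ≤ n − 1 (k = 1,...,d) such that each Q_n f_k − P_{n,k} vanishes to order at least n+1 at z = 0. (Hence the Hermite–Padé denominator for the multi-index (1,...,1) can be chosen with degree strictly less than d.) -/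
open Polynomial PowerSeries

/-- Let `f_1, …, f_d` be formal power series and suppose there are constants `c_1, …, c_d`,
not all zero, with `Σ_k c_k f_k` a polynomial. Then for each sufficiently large `n` there
is a nonzero polynomial `Q_n` with `deg Q_n ≤ d − 1` and polynomials `P_{n,k}` with
`deg P_{n,k} ≤ n − 1` such that each `Q_n f_k − P_{n,k}` vanishes to order ≥ `n+1` at `0`.
(The Hermite–Padé denominator for the multi-index `(1,…,1)` can be chosen of degree `< d`.) -/
theorem stmt13 (d : ℕ) (hd : 1 ≤ d) (f : Fin d → PowerSeries ℂ)
    (c : Fin d → ℂ) (hc : ∃ k, c k ≠ 0)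
    (P : Polynomial ℂ) (hP : ∑ k, c k • f k = (P : PowerSeries ℂ)) :
    ∃ N : ℕ, ∀ n, N ≤ n →
      ∃ Q : Polynomial ℂ, Q ≠ 0 ∧ Q.degree ≤ ((d - 1 : ℕ) : ℕ) ∧
        ∀ k, ∃ Pk : Polynomial ℂ, Pk.degree ≤ ((n - 1 : ℕ) : ℕ) ∧
          ∀ j, j ≤ n →
            (PowerSeries.coeff (R := ℂ) j) ((Q : PowerSeries ℂ) * f k - (Pk : PowerSeries ℂ)) = 0 := by
  obtain ⟨k0, hk0⟩ := hc
  refine ⟨d + P.natDegree + 1, fun n hn => ?_⟩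
  -- linear functional ℓ
  set ℓ : (Fin d → ℂ) →ₗ[ℂ] ℂ := ∑ k, c k • LinearMap.proj k with hℓ
  have hℓ_apply : ∀ v, ℓ v = ∑ k, c k * v k := by
    intro v; simp [hℓ, LinearMap.sum_apply]
  -- the map T
  set T : degreeLT ℂ d →ₗ[ℂ] (Fin d → ℂ) :=
    LinearMap.pi (fun k => (PowerSeries.coeff (R := ℂ) n) ∘ₗ (LinearMap.mulRight ℂ (f k)) ∘ₗ
      (Polynomial.coeToPowerSeries.algHom ℂ).toLinearMap ∘ₗ (degreeLT ℂ d).subtype) with hT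
  have hT_apply : ∀ (Q : degreeLT ℂ d) (k : Fin d),
      T Q k = (PowerSeries.coeff (R := ℂ) n) (((Q : Polynomial ℂ) : PowerSeries ℂ) * f k) := by
    intro Q k
    simp [hT, LinearMap.pi_apply, Polynomial.coeToPowerSeries.algHom_apply, PowerSeries.map_id]
  -- T maps into ker ℓ
  have hmem : ∀ Q : degreeLT ℂ d, T Q ∈ LinearMap.ker ℓ := by
    intro Q
    have hQdeg : (Q : Polynomial ℂ).natDegree ≤ d - 1 := by
      have := Polynomial.mem_degreeLT.mp Q.2
      rcases eq_or_ne (Q : Polynomial ℂ) 0 with h | h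
      · simp [h]
      · have := Polynomial.natDegree_lt_iff_degree_lt h |>.mpr (by exact_mod_cast this)
        omega
    have key : ∑ k, c k * (PowerSeries.coeff (R := ℂ) n) (((Q : Polynomial ℂ) : PowerSeries ℂ) * f k)
        = 0 := by
      have : ∑ k, c k * (PowerSeries.coeff (R := ℂ) n) (((Q : Polynomial ℂ) : PowerSeries ℂ) * f k)
          = (PowerSeries.coeff (R := ℂ) n) (((Q : Polynomial ℂ) : PowerSeries ℂ) * ∑ k, c k • f k) := by
        rw [Finset.mul_sum, map_sum]
        congr 1; ext k
        rw [mul_smul_comm, map_smul, smul_eq_mul]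
      rw [this, hP, ← Polynomial.coe_mul, Polynomial.coeff_coe]
      apply Polynomial.coeff_eq_zero_of_natDegree_lt
      calc ((Q : Polynomial ℂ) * P).natDegree ≤ (Q : Polynomial ℂ).natDegree + P.natDegree :=
            Polynomial.natDegree_mul_le
        _ ≤ (d - 1) + P.natDegree := by omega
        _ < n := by omega
    rw [LinearMap.mem_ker, hℓ_apply]
    simpa [hT_apply] using key
  -- find nonzero Q in kernel of T
  have hker : ∃ Q : degreeLT ℂ d, Q ≠ 0 ∧ T Q = 0 := by
    by_contra h
    push_neg at h
    have hinj : Function.Injective (LinearMap.codRestrict (LinearMap.ker ℓ) T hmem) := by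
      rw [← LinearMap.ker_eq_bot, Submodule.eq_bot_iff]
      intro Q hQ
      by_contra hQ0
      exact (h Q hQ0) (by
        have := congrArg (Submodule.subtype _) hQ
        simpa [LinearMap.codRestrict] using Subtype.ext_iff.mp hQ)
    have h1 : Module.finrank ℂ (degreeLT ℂ d) = d := by
      rw [(Polynomial.degreeLTEquiv ℂ d).finrank_eq]
      simp [Module.finrank_fin_fun]
    have h2 : Module.finrank ℂ (LinearMap.ker ℓ) < d := by
      have hrk := LinearMap.finrank_range_add_finrank_ker ℓ
      have hrpos : 0 < Module.finrank ℂ (LinearMap.range ℓ) := by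
        rw [Module.finrank_pos_iff]
        refine ⟨⟨⟨ℓ (Pi.single k0 1), LinearMap.mem_range_self _ _⟩, 0, ?_⟩⟩
        simp only [ne_eq, Submodule.mk_eq_zero]
        rw [hℓ_apply]
        simpa [Pi.single_apply, mul_ite, Finset.sum_ite_eq'] using hk0
      have : Module.finrank ℂ (Fin d → ℂ) = d := Module.finrank_fin_fun ℂ
      omega
    have := LinearMap.finrank_le_finrank_of_injective hinj
    omega
  obtain ⟨Q, hQ0, hTQ⟩ := hker
  refine ⟨(Q : Polynomial ℂ), by simpa [Submodule.coe_eq_zero] using hQ0, ?_, ?_⟩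
  · have := Polynomial.mem_degreeLT.mp Q.2
    rcases eq_or_ne (Q : Polynomial ℂ) 0 with h | h
    · simp [h]
    · have h1 := Polynomial.natDegree_lt_iff_degree_lt h |>.mpr (by exact_mod_cast this)
      exact Polynomial.degree_le_of_natDegree_le (by omega)
  · intro k
    refine ⟨PowerSeries.trunc n (((Q : Polynomial ℂ) : PowerSeries ℂ) * f k), ?_, ?_⟩
    · have hlt := PowerSeries.degree_trunc_lt (((Q : Polynomial ℂ) : PowerSeries ℂ) * f k) n
      rcases eq_or_ne (PowerSeries.trunc n (((Q : Polynomial ℂ) : PowerSeries ℂ) * f k)) 0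
        with h | h
      · simp [h]
      · have h1 := Polynomial.natDegree_lt_iff_degree_lt h |>.mpr hlt
        exact Polynomial.degree_le_of_natDegree_le (by omega)
    · intro j hj
      rw [map_sub, Polynomial.coeff_coe, PowerSeries.coeff_trunc]
      rcases lt_or_eq_of_le hj with h | h
      · simp [h]
      · subst h
        have : T Q k = 0 := by rw [hTQ]; rfl
        rw [hT_apply] at this
        simp [this]
end

section
/- Suppose for all sufficiently large n, the polynomial Q_n of exact degree m is, up to normalization, the unique nonzero polynomial of degree ≤ m such that there exist polynomials P_{n,k}, deg P_{n,k} ≤ n − m_k, with Q_n f_k − P_{n,k} = O(z^{n+1}) for k = 1, ..., d (where Σ m_k = m). Then there do not exist polynomials p_1, ..., p_d with deg p_k ≤ m_k − 1, not all zero, such that Σ_k p_k f_k is a polynomial; i.e., the system f = (f_1, ..., f_d) is algebraically independent with respect to (m_1, ..., m_d). -/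
open Polynomial PowerSeries

/-- `Q` is a solution of the `(n, (m_1, …, m_d))` Hermite–Padé problem for the system `f`:
`Q ≠ 0`, `deg Q ≤ m_1 + ⋯ + m_d`, and for each `k` there is a polynomial `P_k` with
`deg P_k ≤ n − m_k` and `Q f_k − P_k = O(z^{n+1})`. -/
def IsHPDenominator {d : ℕ} (f : Fin d → PowerSeries ℂ) (mk : Fin d → ℕ)
    (n : ℕ) (Q : Polynomial ℂ) : Prop :=
  Q ≠ 0 ∧ Q.degree ≤ ((∑ k, mk k : ℕ) : ℕ) ∧
  ∀ k, ∃ P : Polynomial ℂ, P.degree ≤ ((n - mk k : ℕ) : ℕ) ∧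
    ∀ j, j ≤ n →
      (PowerSeries.coeff (R := ℂ) j) ((Q : PowerSeries ℂ) * f k - (P : PowerSeries ℂ)) = 0

private lemma withBot_le_of_lt_succ {n : ℕ} {a : WithBot ℕ}
    (h : a < ((n + 1 : ℕ) : WithBot ℕ)) : a ≤ (n : ℕ) := by
  cases a with
  | bot => exact bot_le
  | coe b =>
    simp only [Nat.cast_withBot] at h ⊢
    rw [WithBot.coe_lt_coe] at h
    exact WithBot.coe_le_coe.mpr (Nat.lt_succ_iff.mp h)

/-- If for all sufficiently large `n` the Hermite–Padé denominator is unique up to a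
multiplicative constant and has exact degree `m = Σ m_k`, then there are no polynomials
`p_1, …, p_d`, not all zero, with `deg p_k ≤ m_k − 1` such that `Σ_k p_k f_k` is a
polynomial; i.e., the system `f` is algebraically independent with respect to
`(m_1, …, m_d)`. -/
theorem stmt17 (d : ℕ) (hd : 1 ≤ d) (f : Fin d → PowerSeries ℂ)
    (mk : Fin d → ℕ) (hmk : ∀ k, 1 ≤ mk k)
    (hypo : ∃ N : ℕ, ∀ n, N ≤ n → ∃ Q : Polynomial ℂ,
      Q.natDegree = ∑ k, mk k ∧ IsHPDenominator f mk n Q ∧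
      ∀ Q' : Polynomial ℂ, IsHPDenominator f mk n Q' →
        ∃ c : ℂ, Q' = Polynomial.C c * Q) :
    ¬ ∃ p : Fin d → Polynomial ℂ, (∃ k, p k ≠ 0) ∧
        (∀ k, (p k).degree ≤ ((mk k - 1 : ℕ) : ℕ)) ∧
        ∃ P : Polynomial ℂ,
          ∑ k, (p k : PowerSeries ℂ) * f k = (P : PowerSeries ℂ) := by
  classical
  rintro ⟨p, ⟨k0, hk0⟩, hdeg, P, hrel⟩
  obtain ⟨N, hN⟩ := hypo
  set m := ∑ k, mk k with hm
  have hmk_le : ∀ k, mk k ≤ m :=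
    fun k => Finset.single_le_sum (fun i _ => Nat.zero_le _) (Finset.mem_univ k)
  set ν : ℕ := N + m + P.natDegree + 1 with hνdef
  obtain ⟨Q, hQdeg, hQHP, hQuniq⟩ := hN ν (by omega)
  have hpdeg : ∀ k, (p k).natDegree ≤ mk k - 1 :=
    fun k => natDegree_le_iff_degree_le.mpr (hdeg k)
  -- the key linear relation among the interpolation conditions
  have key : ∀ Q' : Polynomial ℂ, Q'.natDegree ≤ m →
      ∑ σ : (Σ k : Fin d, Fin (mk k)), (p σ.1).coeff σ.2 *
        (PowerSeries.coeff (ν - (σ.2 : ℕ))) ((Q' : PowerSeries ℂ) * f σ.1) = 0 := by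
    intro Q' hQ'
    have step1 : ∀ k : Fin d,
        ∑ i : Fin (mk k), (p k).coeff i *
          (PowerSeries.coeff (ν - (i : ℕ))) ((Q' : PowerSeries ℂ) * f k)
        = (PowerSeries.coeff ν)
            ((p k : PowerSeries ℂ) * ((Q' : PowerSeries ℂ) * f k)) := by
      intro k
      rw [PowerSeries.coeff_mul, Finset.Nat.sum_antidiagonal_eq_sum_range_succ_mk]
      have h1 : ∑ i ∈ Finset.range (ν + 1),
          (PowerSeries.coeff i) (p k : PowerSeries ℂ) *
            (PowerSeries.coeff (ν - i)) ((Q' : PowerSeries ℂ) * f k)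
          = ∑ i ∈ Finset.range (ν + 1),
          (p k).coeff i * (PowerSeries.coeff (ν - i)) ((Q' : PowerSeries ℂ) * f k) :=
        Finset.sum_congr rfl (fun i _ => by rw [Polynomial.coeff_coe])
      rw [h1]
      have h2 : ∑ i ∈ Finset.range (mk k),
          (p k).coeff i * (PowerSeries.coeff (ν - i)) ((Q' : PowerSeries ℂ) * f k)
          = ∑ i ∈ Finset.range (ν + 1),
          (p k).coeff i * (PowerSeries.coeff (ν - i)) ((Q' : PowerSeries ℂ) * f k) := by
        apply Finset.sum_subset (Finset.range_subset_range.mpr (by have := hmk_le k; omega))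
        intro i _ hni
        have hi : mk k ≤ i := by simpa [Finset.mem_range, not_lt] using hni
        have : (p k).natDegree < i := by have := hpdeg k; have := hmk k; omega
        rw [Polynomial.coeff_eq_zero_of_natDegree_lt this, zero_mul]
      rw [← h2]
      exact Fin.sum_univ_eq_sum_range
        (fun i => (p k).coeff i * (PowerSeries.coeff (ν - i)) ((Q' : PowerSeries ℂ) * f k))
        (mk k)
    calc ∑ σ : (Σ k : Fin d, Fin (mk k)), (p σ.1).coeff σ.2 *
          (PowerSeries.coeff (ν - (σ.2 : ℕ))) ((Q' : PowerSeries ℂ) * f σ.1)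
        = ∑ k : Fin d, ∑ i : Fin (mk k), (p k).coeff i *
          (PowerSeries.coeff (ν - (i : ℕ))) ((Q' : PowerSeries ℂ) * f k) := by
          rw [← Finset.univ_sigma_univ, Finset.sum_sigma]
      _ = ∑ k : Fin d, (PowerSeries.coeff ν)
            ((p k : PowerSeries ℂ) * ((Q' : PowerSeries ℂ) * f k)) :=
          Finset.sum_congr rfl (fun k _ => step1 k)
      _ = (PowerSeries.coeff ν)
            (∑ k : Fin d, (p k : PowerSeries ℂ) * ((Q' : PowerSeries ℂ) * f k)) := by
          rw [map_sum]
      _ = (PowerSeries.coeff ν)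
            ((Q' : PowerSeries ℂ) * ∑ k : Fin d, (p k : PowerSeries ℂ) * f k) := by
          rw [Finset.mul_sum]
          congr 1
          exact Finset.sum_congr rfl (fun k _ => by ring)
      _ = (PowerSeries.coeff ν) ((Q' : PowerSeries ℂ) * (P : PowerSeries ℂ)) := by
          rw [hrel]
      _ = 0 := by
          rw [← Polynomial.coe_mul, Polynomial.coeff_coe]
          apply Polynomial.coeff_eq_zero_of_natDegree_lt
          have := Polynomial.natDegree_mul_le (p := Q') (q := P)
          omega
  -- the linear map of interpolation conditions
  haveI : FiniteDimensional ℂ (Polynomial.degreeLT ℂ (m + 1)) :=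
    Module.Finite.equiv (Polynomial.degreeLTEquiv ℂ (m + 1)).symm
  let T : (Polynomial.degreeLT ℂ (m + 1)) →ₗ[ℂ] ((Σ k : Fin d, Fin (mk k)) → ℂ) :=
    { toFun := fun Q' σ =>
        (PowerSeries.coeff (ν - (σ.2 : ℕ))) ((Q'.1 : PowerSeries ℂ) * f σ.1)
      map_add' := fun a b => by
        funext σ
        simp [Polynomial.coe_add, add_mul]
      map_smul' := fun c a => by
        funext σ
        simp only [SetLike.val_smul, Polynomial.smul_eq_C_mul, Polynomial.coe_mul,
          Polynomial.coe_C, RingHom.id_apply, Pi.smul_apply, smul_eq_mul]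
        rw [mul_assoc, PowerSeries.coeff_C_mul] }
  have hQmem : Q ∈ Polynomial.degreeLT ℂ (m + 1) := by
    rw [Polynomial.mem_degreeLT]
    have h1 : Q.degree ≤ (m : ℕ) := natDegree_le_iff_degree_le.mp (le_of_eq hQdeg)
    refine lt_of_le_of_lt h1 ?_
    simp only [Nat.cast_withBot]
    exact_mod_cast WithBot.coe_lt_coe.mpr (Nat.lt_succ_self m)
  -- kernel of T is contained in the line spanned by Q
  have hker : LinearMap.ker T ≤ Submodule.span ℂ
      {(⟨Q, hQmem⟩ : Polynomial.degreeLT ℂ (m + 1))} := by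
    rintro ⟨Q', hQ'mem⟩ hQ'ker
    rw [LinearMap.mem_ker] at hQ'ker
    have hcond : ∀ (k : Fin d) (i : Fin (mk k)),
        (PowerSeries.coeff (ν - (i : ℕ))) ((Q' : PowerSeries ℂ) * f k) = 0 :=
      fun k i => congrFun hQ'ker ⟨k, i⟩
    by_cases h0 : Q' = 0
    · have : (⟨Q', hQ'mem⟩ : Polynomial.degreeLT ℂ (m + 1)) = 0 := Subtype.ext h0
      rw [this]; exact zero_mem _
    · have hHP : IsHPDenominator f mk ν Q' := by
        refine ⟨h0, ?_, ?_⟩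
        · exact withBot_le_of_lt_succ (Polynomial.mem_degreeLT.mp hQ'mem)
        · intro k
          refine ⟨PowerSeries.trunc (ν - mk k + 1) ((Q' : PowerSeries ℂ) * f k), ?_, ?_⟩
          · exact withBot_le_of_lt_succ
              (PowerSeries.degree_trunc_lt ((Q' : PowerSeries ℂ) * f k) (ν - mk k + 1))
          · intro j hj
            rw [map_sub, Polynomial.coeff_coe, PowerSeries.coeff_trunc]
            by_cases hjlt : j < ν - mk k + 1
            · rw [if_pos hjlt, sub_self]
            · rw [if_neg hjlt, sub_zero]
              have hmkν : mk k ≤ ν := le_trans (hmk_le k) (by omega)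
              have hi : ν - j < mk k := by omega
              have := hcond k ⟨ν - j, hi⟩
              simpa [Nat.sub_sub_self hj] using this
      obtain ⟨c, hc⟩ := hQuniq Q' hHP
      refine Submodule.mem_span_singleton.mpr ⟨c, ?_⟩
      apply Subtype.ext
      simp [hc, Polynomial.smul_eq_C_mul]
  -- dimension count: T is surjective
  have hQne : (⟨Q, hQmem⟩ : Polynomial.degreeLT ℂ (m + 1)) ≠ 0 := by
    intro h
    exact hQHP.1 (by simpa using congrArg Subtype.val h)
  have hkerdim : Module.finrank ℂ (LinearMap.ker T) ≤ 1 := by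
    calc Module.finrank ℂ (LinearMap.ker T)
        ≤ Module.finrank ℂ (Submodule.span ℂ
            {(⟨Q, hQmem⟩ : Polynomial.degreeLT ℂ (m + 1))}) :=
          Submodule.finrank_mono hker
      _ = 1 := finrank_span_singleton hQne
  have hV : Module.finrank ℂ (Polynomial.degreeLT ℂ (m + 1)) = m + 1 := by
    rw [(Polynomial.degreeLTEquiv ℂ (m + 1)).finrank_eq, Module.finrank_pi]
    simp
  have hW : Module.finrank ℂ ((Σ k : Fin d, Fin (mk k)) → ℂ) = m := by
    rw [Module.finrank_pi]
    simp [Fintype.card_sigma, hm]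
  have hsurj : Function.Surjective T := by
    rw [← LinearMap.range_eq_top]
    apply Submodule.eq_top_of_finrank_eq
    have h1 := LinearMap.finrank_range_add_finrank_ker T
    have h2 := Submodule.finrank_le (LinearMap.range T)
    rw [hV] at h1
    rw [hW] at h2 ⊢
    omega
  -- derive the contradiction
  have hi0 : (p k0).natDegree < mk k0 := by
    have := hpdeg k0; have := hmk k0; omega
  obtain ⟨Q0, hQ0⟩ := hsurj (Pi.single ⟨k0, ⟨(p k0).natDegree, hi0⟩⟩ 1)
  have hQ0deg : (Q0 : Polynomial ℂ).natDegree ≤ m :=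
    natDegree_le_iff_degree_le.mpr
      (withBot_le_of_lt_succ (Polynomial.mem_degreeLT.mp Q0.2))
  have h0 := key Q0.1 hQ0deg
  have heq : ∑ σ : (Σ k : Fin d, Fin (mk k)), (p σ.1).coeff σ.2 *
      (Pi.single (⟨k0, ⟨(p k0).natDegree, hi0⟩⟩ : Σ k : Fin d, Fin (mk k)) (1 : ℂ) :
        (Σ k : Fin d, Fin (mk k)) → ℂ) σ
      = 0 := by
    rw [← h0]
    refine Finset.sum_congr rfl (fun σ _ => ?_)
    rw [← congrFun hQ0 σ]
    rfl
  rw [Finset.sum_eq_single (⟨k0, ⟨(p k0).natDegree, hi0⟩⟩ : Σ k : Fin d, Fin (mk k))] at heq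
  · simp only [Pi.single_eq_same, mul_one] at heq
    exact hk0 (Polynomial.leadingCoeff_eq_zero.mp heq)
  · intro σ _ hσ
    rw [Pi.single_eq_of_ne hσ, mul_zero]
  · intro h
    exact absurd (Finset.mem_univ _) h
end
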